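/- For a bivariate standard normal pair (X, Y) with correlation ρ ∈ [-1, 1] and any t > 1, |P(X > t, Y > t) - P(X > t)P(Y > t)| ≤ C|ρ|e^{-t²/2} for an absolute constant C. -/

import Mathlib

open MeasureTheory ProbabilityTheory

noncomputable def stdNormalCDF (x : ℝ) : ℝ :=
  ∫ t in Set.Iic x, (Real.sqrt (2 * Real.pi))⁻¹ * Real.exp (-(t ^ 2) / 2)

/-- The joint law of a bivariate standard normal pair with correlation ρ,
    realized as the pushforward of two independent standard normals under
    (z₁, z₂) ↦ (z₁, ρ z₁ + √(1-ρ²) z₂). -/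
noncomputable def bivariateStdNormal (ρ : ℝ) : Measure (ℝ × ℝ) :=
  Measure.map (fun z : ℝ × ℝ => (z.1, ρ * z.1 + Real.sqrt (1 - ρ ^ 2) * z.2))
    ((gaussianReal 0 1).prod (gaussianReal 0 1))

open Real Set
open scoped ENNReal NNReal

noncomputable def phi (x : ℝ) : ℝ := (Real.sqrt (2 * Real.pi))⁻¹ * Real.exp (-x ^ 2 / 2)

lemma phi_eq (x : ℝ) : gaussianPDFReal 0 1 x = phi x := by
  simp [gaussianPDFReal, phi]

lemma phi_nonneg (x : ℝ) : 0 ≤ phi x := by unfold phi; positivity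

lemma sqrt_two_pi_ge_two : (2:ℝ) ≤ Real.sqrt (2 * Real.pi) := by
  have : (4:ℝ) ≤ 2 * Real.pi := by nlinarith [Real.pi_gt_three]
  nlinarith [Real.sq_sqrt (by positivity : (0:ℝ) ≤ 2 * Real.pi),
    Real.sqrt_nonneg (2 * Real.pi)]

lemma phi_le_half (x : ℝ) : phi x ≤ 1 / 2 := by
  unfold phi
  have h1 : Real.exp (-x ^ 2 / 2) ≤ 1 := by
    rw [Real.exp_le_one_iff]; nlinarith [sq_nonneg x]
  have h2 : (Real.sqrt (2 * Real.pi))⁻¹ ≤ 1 / 2 := by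
    rw [inv_le_comm₀ (by linarith [sqrt_two_pi_ge_two]) (by norm_num)]
    linarith [sqrt_two_pi_ge_two]
  nlinarith [Real.sqrt_nonneg (2 * Real.pi), Real.exp_pos (-x^2/2)]

lemma gauss_toReal (s : Set ℝ) :
    ((gaussianReal 0 1) s).toReal = ∫ x in s, phi x := by
  rw [gaussianReal_apply_eq_integral 0 one_ne_zero s]
  rw [ENNReal.toReal_ofReal (integral_nonneg fun x => gaussianPDFReal_nonneg 0 1 x)]
  simp_rw [phi_eq]

noncomputable def Phibar (a : ℝ) : ℝ := ((gaussianReal 0 1) (Set.Ioi a)).toReal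

lemma Phibar_nonneg (a : ℝ) : 0 ≤ Phibar a := ENNReal.toReal_nonneg

lemma Phibar_le_one (a : ℝ) : Phibar a ≤ 1 := by
  unfold Phibar
  rw [← ENNReal.toReal_one]
  exact ENNReal.toReal_mono (by simp) prob_le_one

lemma Phibar_eq (t : ℝ) : Phibar t = 1 - stdNormalCDF t := by
  have h : stdNormalCDF t = ((gaussianReal 0 1) (Set.Iic t)).toReal := by
    rw [gauss_toReal]; unfold stdNormalCDF phi
    congr 1
  have hu : (gaussianReal 0 1) (Set.Iic t) + (gaussianReal 0 1) (Set.Ioi t) = 1 := by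
    rw [← measure_union (by simp [Set.disjoint_left]) measurableSet_Ioi]
    simp [Set.Iic_union_Ioi]
  have h1 : ((gaussianReal 0 1) (Set.Iic t)).toReal
      + ((gaussianReal 0 1) (Set.Ioi t)).toReal = 1 := by
    rw [← ENNReal.toReal_add (measure_ne_top _ _) (measure_ne_top _ _), hu, ENNReal.toReal_one]
  unfold Phibar
  rw [h]; linarith

lemma Phibar_lipschitz (a b : ℝ) : |Phibar a - Phibar b| ≤ |a - b| / 2 := by
  wlog hab : a ≤ b generalizing a b
  · rw [abs_sub_comm, abs_sub_comm a b]; exact this b a (le_of_not_ge hab)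
  have hsplit : (gaussianReal 0 1) (Set.Ioi a)
      = (gaussianReal 0 1) (Set.Ioc a b) + (gaussianReal 0 1) (Set.Ioi b) := by
    have hd : Disjoint (Set.Ioc a b) (Set.Ioi b) := by
      rw [Set.disjoint_left]
      intro x hx hx2
      simp only [Set.mem_Ioc] at hx
      simp only [Set.mem_Ioi] at hx2
      linarith [hx.2]
    rw [← measure_union hd measurableSet_Ioi, Set.Ioc_union_Ioi_eq_Ioi hab]
  have hfin : Phibar a - Phibar b = ((gaussianReal 0 1) (Set.Ioc a b)).toReal := by
    unfold Phibar
    rw [hsplit, ENNReal.toReal_add (measure_ne_top _ _) (measure_ne_top _ _)]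
    ring
  rw [hfin]
  rw [gauss_toReal]
  rw [abs_of_nonneg (integral_nonneg fun x => phi_nonneg x)]
  have hphim : Measurable phi := by
    have := measurable_gaussianPDFReal 0 1
    simpa [funext phi_eq] using this
  have hm : AEStronglyMeasurable phi (volume.restrict (Set.Ioc a b)) :=
    hphim.aestronglyMeasurable
  have := norm_setIntegral_le_of_norm_le_const (μ := volume) (s := Set.Ioc a b)
    (C := 1/2) (f := phi) (by simp) (fun x _ => by
      rw [Real.norm_eq_abs, abs_of_nonneg (phi_nonneg x)]; exact phi_le_half x)
  rw [Real.norm_eq_abs, abs_of_nonneg (integral_nonneg fun x => phi_nonneg x)] at this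
  calc ∫ x in Set.Ioc a b, phi x ≤ 1/2 * (volume (Set.Ioc a b)).toReal := this
    _ ≤ |a - b| / 2 := by
        rw [Real.volume_Ioc, ENNReal.toReal_ofReal (by linarith)]
        rw [abs_of_nonpos (by linarith)]
        linarith

lemma measurable_phi : Measurable phi := by
  have := measurable_gaussianPDFReal 0 1
  simpa [funext phi_eq] using this

lemma xexp_integral (t : ℝ) (ht : 0 < t) :
    IntegrableOn (fun x => x * Real.exp (-x ^ 2 / 2)) (Set.Ioi t) ∧
    ∫ x in Set.Ioi t, x * Real.exp (-x ^ 2 / 2) = Real.exp (-t ^ 2 / 2) := by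
  have hderiv : ∀ x ∈ Set.Ici t, HasDerivAt (fun x : ℝ => -Real.exp (-x ^ 2 / 2))
      (x * Real.exp (-x ^ 2 / 2)) x := by
    intro x _
    have h1 : HasDerivAt (fun x : ℝ => -x ^ 2 / 2) (-x) x := by
      have := (((hasDerivAt_pow 2 x).neg).div_const 2)
      refine this.congr_deriv ?_
      simp
      ring
    have h2 := (h1.exp).neg
    refine h2.congr_deriv ?_
    ring
  have hpos : ∀ x ∈ Set.Ioi t, 0 ≤ x * Real.exp (-x ^ 2 / 2) := by
    intro x hx
    have : 0 < x := lt_trans ht hx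
    positivity
  have htend : Filter.Tendsto (fun x : ℝ => -Real.exp (-x ^ 2 / 2))
      Filter.atTop (nhds 0) := by
    have h0 : Filter.Tendsto (fun x : ℝ => -x ^ 2 / 2) Filter.atTop Filter.atBot := by
      apply Filter.Tendsto.atBot_div_const (by norm_num)
      exact Filter.tendsto_neg_atBot_iff.mpr (Filter.tendsto_pow_atTop (by norm_num))
    have h2 := Real.tendsto_exp_atBot.comp h0
    simpa using h2.neg
  constructor
  · exact integrableOn_Ioi_deriv_of_nonneg' hderiv hpos htend
  · rw [integral_Ioi_of_hasDerivAt_of_nonneg' hderiv hpos htend]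
    ring

lemma xphi_integrable (t : ℝ) (ht : 0 < t) :
    IntegrableOn (fun x => x * phi x) (Set.Ioi t) := by
  have := ((xexp_integral t ht).1).const_mul (Real.sqrt (2 * Real.pi))⁻¹
  refine this.congr (Filter.Eventually.of_forall fun x => by unfold phi; ring)

lemma xphi_integral (t : ℝ) (ht : 0 < t) :
    ∫ x in Set.Ioi t, x * phi x
      = (Real.sqrt (2 * Real.pi))⁻¹ * Real.exp (-t ^ 2 / 2) := by
  have h : ∀ x, x * phi x = (Real.sqrt (2 * Real.pi))⁻¹ * (x * Real.exp (-x ^ 2 / 2)) := by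
    intro x; unfold phi; ring
  simp_rw [h]
  rw [integral_const_mul, (xexp_integral t ht).2]

lemma Phibar_tail (t : ℝ) (ht : 1 < t) : Phibar t ≤ Real.exp (-t ^ 2 / 2) := by
  unfold Phibar
  rw [gauss_toReal]
  have h1 : ∫ x in Set.Ioi t, phi x ≤ ∫ x in Set.Ioi t, x * phi x := by
    refine setIntegral_mono_on ?_ (xphi_integrable t (by linarith)) measurableSet_Ioi ?_
    · exact (integrable_gaussianPDFReal 0 1).restrict.congr
        (Filter.Eventually.of_forall fun x => (phi_eq x))
    · intro x hx
      have hx1 : 1 ≤ x := le_of_lt (lt_trans ht hx)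
      nlinarith [phi_nonneg x]
  rw [xphi_integral t (by linarith)] at h1
  have h2 : (Real.sqrt (2 * Real.pi))⁻¹ ≤ 1 := by
    rw [inv_le_one_iff₀]; right; linarith [sqrt_two_pi_ge_two]
  nlinarith [Real.exp_pos (-t ^ 2 / 2), h1]

lemma gaussPDF_eq_nnreal :
    gaussianPDF 0 1 = fun x => (((gaussianPDFReal 0 1 x).toNNReal : ℝ≥0) : ℝ≥0∞) := rfl

lemma nnreal_meas : Measurable (fun y => (gaussianPDFReal 0 1 y).toNNReal) :=
  (measurable_gaussianPDFReal 0 1).real_toNNReal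

lemma gauss_setInt (s : Set ℝ) (hs : MeasurableSet s) (F : ℝ → ℝ) :
    ∫ x in s, F x ∂(gaussianReal 0 1) = ∫ x in s, F x * phi x := by
  rw [gaussianReal_of_var_ne_zero 0 one_ne_zero, gaussPDF_eq_nnreal,
    restrict_withDensity hs, integral_withDensity_eq_integral_smul (f := fun y => (gaussianPDFReal 0 1 y).toNNReal) nnreal_meas]
  refine integral_congr_ae (Filter.Eventually.of_forall fun x => ?_)
  simp only [NNReal.smul_def, smul_eq_mul]
  rw [Real.coe_toNNReal _ (gaussianPDFReal_nonneg 0 1 x), phi_eq]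
  ring

lemma gauss_integrable_iff (s : Set ℝ) (hs : MeasurableSet s) (F : ℝ → ℝ) :
    Integrable F ((gaussianReal 0 1).restrict s)
      ↔ Integrable (fun x => F x * phi x) (volume.restrict s) := by
  rw [gaussianReal_of_var_ne_zero 0 one_ne_zero, gaussPDF_eq_nnreal,
    restrict_withDensity hs, integrable_withDensity_iff_integrable_smul (f := fun y => (gaussianPDFReal 0 1 y).toNNReal) nnreal_meas]
  constructor <;> intro h <;> refine h.congr (Filter.Eventually.of_forall fun x => ?_) <;>
    simp only [NNReal.smul_def, smul_eq_mul] <;>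
    rw [Real.coe_toNNReal _ (gaussianPDFReal_nonneg 0 1 x), phi_eq] <;> ring

lemma joint_repr (ρ t : ℝ) (hs : 0 < Real.sqrt (1 - ρ ^ 2)) :
    ((bivariateStdNormal ρ) {q : ℝ × ℝ | t < q.1 ∧ t < q.2}).toReal
      = ∫ x in Set.Ioi t,
          Phibar ((t - ρ * x) / Real.sqrt (1 - ρ ^ 2)) ∂(gaussianReal 0 1) := by
  set c := Real.sqrt (1 - ρ ^ 2) with hc
  set μ := gaussianReal 0 1 with hμ
  have hf : Measurable (fun z : ℝ × ℝ => (z.1, ρ * z.1 + c * z.2)) :=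
    measurable_fst.prodMk ((measurable_fst.const_mul ρ).add (measurable_snd.const_mul c))
  have hA : MeasurableSet {q : ℝ × ℝ | t < q.1 ∧ t < q.2} :=
    (measurableSet_lt measurable_const measurable_fst).inter
      (measurableSet_lt measurable_const measurable_snd)
  have hpre : (fun z : ℝ × ℝ => (z.1, ρ * z.1 + c * z.2)) ⁻¹'
      {q : ℝ × ℝ | t < q.1 ∧ t < q.2}
      = {z : ℝ × ℝ | t < z.1 ∧ t < ρ * z.1 + c * z.2} := rfl
  have hB : MeasurableSet {z : ℝ × ℝ | t < z.1 ∧ t < ρ * z.1 + c * z.2} :=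
    (measurableSet_lt measurable_const measurable_fst).inter
      (measurableSet_lt measurable_const
        ((measurable_fst.const_mul ρ).add (measurable_snd.const_mul c)))
  have humeas : Measurable (fun x : ℝ => (t - ρ * x) / c) :=
    (measurable_const.sub (measurable_id.const_mul ρ)).div_const c
  have hgmeas : Measurable (fun x : ℝ => μ (Set.Ioi ((t - ρ * x) / c))) := by
    have hanti : Antitone (fun a : ℝ => μ (Set.Ioi a)) :=
      fun a b hab => measure_mono (Set.Ioi_subset_Ioi hab)
    exact hanti.measurable.comp humeas
  rw [bivariateStdNormal, Measure.map_apply hf hA, hpre, Measure.prod_apply hB]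
  have hslice : ∀ x : ℝ,
      μ (Prod.mk x ⁻¹' {z : ℝ × ℝ | t < z.1 ∧ t < ρ * z.1 + c * z.2})
        = Set.indicator (Set.Ioi t) (fun x => μ (Set.Ioi ((t - ρ * x) / c))) x := by
    intro x
    by_cases hx : t < x
    · rw [Set.indicator_apply, if_pos (Set.mem_Ioi.mpr hx)]
      congr 1
      ext y
      simp only [Set.mem_preimage, Set.mem_setOf_eq, Set.mem_Ioi, hx, true_and]
      rw [div_lt_iff₀ hs]
      constructor <;> intro h <;> nlinarith
    · rw [Set.indicator_apply, if_neg (fun h => hx (Set.mem_Ioi.mp h))]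
      have : Prod.mk x ⁻¹' {z : ℝ × ℝ | t < z.1 ∧ t < ρ * z.1 + c * z.2} = ∅ := by
        ext y; simp only [Set.mem_preimage, Set.mem_setOf_eq, Set.mem_empty_iff_false,
          iff_false, not_and]
        intro h; exact absurd h hx
      rw [this, measure_empty]
  rw [lintegral_congr hslice, lintegral_indicator measurableSet_Ioi _]
  rw [← integral_toReal (hgmeas.aemeasurable.restrict)
    (Filter.Eventually.of_forall fun x => measure_lt_top μ _)]
  rfl

lemma diff_bound (ρ t x : ℝ) (hρabs : |ρ| < 1 / 2) (ht : 1 < t) (hx : t < x) :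
    |(t - ρ * x) / Real.sqrt (1 - ρ ^ 2) - t| ≤ 3 * |ρ| * x := by
  have hρsq : ρ ^ 2 ≤ 1 / 4 := by nlinarith [le_abs_self ρ, neg_abs_le ρ, abs_nonneg ρ]
  set c := Real.sqrt (1 - ρ ^ 2) with hcdef
  have hc2 : c ^ 2 = 1 - ρ ^ 2 := Real.sq_sqrt (by nlinarith)
  have hcpos : 0 < c := Real.sqrt_pos.mpr (by nlinarith)
  have hcge : 3 / 4 ≤ c := by nlinarith
  have hcle : c ≤ 1 := by nlinarith
  have heq2 : (t - ρ * x) / c - t = (t - ρ * x - c * t) / c := by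
    field_simp
  rw [heq2, abs_div, abs_of_pos hcpos, div_le_iff₀ hcpos]
  have h1c : 1 - c ≤ ρ ^ 2 := by nlinarith
  have hρ2' : ρ ^ 2 ≤ |ρ| := by nlinarith [sq_abs ρ, abs_nonneg ρ]
  have hxpos : (0:ℝ) < x := by linarith
  have e1 : t * (1 - c) ≤ x * ρ ^ 2 := by nlinarith [sq_nonneg ρ]
  have e2 : -(ρ * x) ≤ |ρ| * x := by nlinarith [neg_abs_le ρ]
  have e3 : x * ρ ^ 2 ≤ |ρ| * x := by nlinarith
  have e4 : ρ * x ≤ |ρ| * x := mul_le_mul_of_nonneg_right (le_abs_self ρ) hxpos.le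
  have e5 : 0 ≤ t * (1 - c) := by nlinarith
  have hnum : |t - ρ * x - c * t| ≤ 2 * |ρ| * x := by
    rw [abs_le]
    constructor
    · nlinarith [abs_nonneg ρ]
    · nlinarith
  nlinarith [abs_nonneg ρ]

/-- For a bivariate standard normal pair with correlation ρ ∈ [-1,1] and t > 1,
    |P(X > t, Y > t) - P(X > t) P(Y > t)| ≤ C |ρ| e^{-t²/2}. -/
theorem bivariate_covariance_bound :
    ∃ C : ℝ, 0 < C ∧ ∀ ρ t : ℝ, -1 ≤ ρ → ρ ≤ 1 → 1 < t →
      |((bivariateStdNormal ρ) {q : ℝ × ℝ | t < q.1 ∧ t < q.2}).toReal -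
          (1 - stdNormalCDF t) * (1 - stdNormalCDF t)| ≤
        C * |ρ| * Real.exp (-t ^ 2 / 2) := by
  refine ⟨4, by norm_num, fun ρ t hρ1 hρ2 ht => ?_⟩
  rw [← Phibar_eq]
  have hexp : 0 < Real.exp (-t ^ 2 / 2) := Real.exp_pos _
  by_cases hcase : 1 / 2 ≤ |ρ|
  · -- crude bound
    have hPle : ((bivariateStdNormal ρ) {q : ℝ × ℝ | t < q.1 ∧ t < q.2}).toReal ≤ Phibar t := by
      set c := Real.sqrt (1 - ρ ^ 2)
      have hf : Measurable (fun z : ℝ × ℝ => (z.1, ρ * z.1 + c * z.2)) :=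
        measurable_fst.prodMk ((measurable_fst.const_mul ρ).add (measurable_snd.const_mul c))
      have hA : MeasurableSet {q : ℝ × ℝ | t < q.1} :=
        measurableSet_lt measurable_const measurable_fst
      have hmono : (bivariateStdNormal ρ) {q : ℝ × ℝ | t < q.1 ∧ t < q.2}
          ≤ (bivariateStdNormal ρ) {q : ℝ × ℝ | t < q.1} :=
        measure_mono (fun q hq => hq.1)
      have heq : (bivariateStdNormal ρ) {q : ℝ × ℝ | t < q.1}
          = (gaussianReal 0 1) (Set.Ioi t) := by
        rw [bivariateStdNormal, Measure.map_apply hf hA]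
        have : (fun z : ℝ × ℝ => (z.1, ρ * z.1 + c * z.2)) ⁻¹' {q : ℝ × ℝ | t < q.1}
            = (Set.Ioi t) ×ˢ (Set.univ : Set ℝ) := by
          ext z; simp [Set.mem_prod]
        rw [this, Measure.prod_prod]
        simp
      refine le_trans (ENNReal.toReal_mono (by rw [heq]; exact measure_ne_top _ _) hmono) ?_
      rw [heq]; rfl
    have hPnn : 0 ≤ ((bivariateStdNormal ρ) {q : ℝ × ℝ | t < q.1 ∧ t < q.2}).toReal :=
      ENNReal.toReal_nonneg
    have htail := Phibar_tail t ht
    have h1 : Phibar t * Phibar t ≤ Phibar t := by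
      nlinarith [Phibar_nonneg t, Phibar_le_one t]
    rw [abs_le]
    constructor <;> nlinarith [Phibar_nonneg t]
  · -- |ρ| < 1/2
    push_neg at hcase
    have hρabs : |ρ| < 1 / 2 := hcase
    have hρsq : ρ ^ 2 ≤ 1 / 4 := by nlinarith [le_abs_self ρ, neg_abs_le ρ, abs_nonneg ρ]
    set c := Real.sqrt (1 - ρ ^ 2) with hcdef
    have hc2 : c ^ 2 = 1 - ρ ^ 2 := Real.sq_sqrt (by nlinarith)
    have hcpos : 0 < c := Real.sqrt_pos.mpr (by nlinarith)
    have hcge : 3 / 4 ≤ c := by nlinarith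
    have hcle : c ≤ 1 := by nlinarith
    rw [joint_repr ρ t hcpos]
    set μ := gaussianReal 0 1 with hμdef
    have humeas : Measurable (fun x : ℝ => (t - ρ * x) / c) :=
      (measurable_const.sub (measurable_id.const_mul ρ)).div_const c
    have hanti : Antitone (fun a : ℝ => μ (Set.Ioi a)) :=
      fun a b hab => measure_mono (Set.Ioi_subset_Ioi hab)
    have hI1 : Integrable (fun x => Phibar ((t - ρ * x) / c)) (μ.restrict (Set.Ioi t)) := by
      refine ⟨((hanti.measurable.comp humeas).ennreal_toReal).aestronglyMeasurable, ?_⟩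
      refine HasFiniteIntegral.of_bounded (C := 1) (Filter.Eventually.of_forall fun x => ?_)
      rw [Real.norm_eq_abs, abs_of_nonneg (Phibar_nonneg _)]
      exact Phibar_le_one _
    have hconst : Phibar t * Phibar t = ∫ _ in Set.Ioi t, Phibar t ∂μ := by
      rw [setIntegral_const, smul_eq_mul]
      rfl
    rw [hconst, ← integral_sub hI1 (integrable_const _)]
    have hg : Integrable (fun x => 3 / 2 * |ρ| * x) (μ.restrict (Set.Ioi t)) := by
      rw [gauss_integrable_iff _ measurableSet_Ioi]
      have := (xphi_integrable t (by linarith)).const_mul (3 / 2 * |ρ|)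
      exact this.congr (Filter.Eventually.of_forall fun x => by ring)
    have hbound : ∀ x, t < x →
        |Phibar ((t - ρ * x) / c) - Phibar t| ≤ 3 / 2 * |ρ| * x := by
      intro x hx
      have hL := Phibar_lipschitz ((t - ρ * x) / c) t
      have hdiff := diff_bound ρ t x hρabs ht hx
      rw [← hcdef] at hdiff
      calc |Phibar ((t - ρ * x) / c) - Phibar t| ≤ |(t - ρ * x) / c - t| / 2 := hL
        _ ≤ 3 * |ρ| * x / 2 := by linarith
        _ = 3 / 2 * |ρ| * x := by ring
    have habs : |∫ x in Set.Ioi t, (Phibar ((t - ρ * x) / c) - Phibar t) ∂μ|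
        ≤ ∫ x in Set.Ioi t, 3 / 2 * |ρ| * x ∂μ := by
      rw [← Real.norm_eq_abs]
      refine le_trans (norm_integral_le_integral_norm _) ?_
      refine integral_mono_of_nonneg (Filter.Eventually.of_forall fun x => norm_nonneg _) hg ?_
      filter_upwards [self_mem_ae_restrict measurableSet_Ioi] with x hx
      rw [Real.norm_eq_abs]
      exact hbound x hx
    refine le_trans habs ?_
    rw [gauss_setInt _ measurableSet_Ioi]
    have : ∫ x in Set.Ioi t, 3 / 2 * |ρ| * x * phi x
        = 3 / 2 * |ρ| * ((Real.sqrt (2 * Real.pi))⁻¹ * Real.exp (-t ^ 2 / 2)) := by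
      rw [← xphi_integral t (by linarith), ← integral_const_mul]
      congr 1; ext x; ring
    rw [this]
    have h2 : (Real.sqrt (2 * Real.pi))⁻¹ ≤ 1 := by
      rw [inv_le_one_iff₀]; right; linarith [sqrt_two_pi_ge_two]
    nlinarith [abs_nonneg ρ, Real.exp_pos (-t ^ 2 / 2),
      mul_nonneg (abs_nonneg ρ) (le_of_lt (Real.exp_pos (-t ^ 2 / 2))),
      inv_nonneg.mpr (Real.sqrt_nonneg (2 * Real.pi))]
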